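/- Let n ≥ 1 and let Σ ⊆ ℝ^{n+1} be a Borel set with μ_Σ the n-dimensional Hausdorff measure restricted to Σ. Then: (i) for every x₀ ∈ ℝ^{n+1} and R > 0, μ_Σ(B_R(x₀)) ≤ e^{1/4}·(4π)^{n/2}·λ(Σ)·Rⁿ; and (ii) there is a constant C_n depending only on n such that if V > 0 satisfies μ_Σ(B_R(x₀)) ≤ V·Rⁿ for all x₀ ∈ ℝ^{n+1} and all R > 0, then λ(Σ) ≤ C_n·V. -/
import Mathlib


noncomputable section
open Real MeasureTheory
open scoped ENNReal

/-- The Gaussian surface integral `F_{x₀,t₀}(Σ)`, computed against the `n`-dimensional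
Hausdorff measure restricted to a set `S ⊆ ℝ^{n+1}`, with values in `[0,∞]`. -/
def gaussianF (n : ℕ) (S : Set (EuclideanSpace ℝ (Fin (n+1))))
    (x₀ : EuclideanSpace ℝ (Fin (n+1))) (t₀ : ℝ) : ℝ≥0∞ :=
  ENNReal.ofReal ((4 * π * t₀) ^ (-(n:ℝ)/2)) *
    ∫⁻ x in S, ENNReal.ofReal (Real.exp (-‖x - x₀‖ ^ 2 / (4 * t₀))) ∂μH[(n:ℝ)]

/-- The entropy `λ(Σ) = sup_{x₀, t₀>0} F_{x₀,t₀}(Σ)`. -/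
def entropy (n : ℕ) (S : Set (EuclideanSpace ℝ (Fin (n+1)))) : ℝ≥0∞ :=
  ⨆ (x₀ : EuclideanSpace ℝ (Fin (n+1))) (t₀ : ℝ) (_ : 0 < t₀), gaussianF n S x₀ t₀

/-- Summability of the dimensional series `∑ (k+1)^n e^{-k²}`. -/
lemma aux_summable (n : ℕ) :
    Summable (fun k : ℕ => ((k:ℝ)+1)^n * Real.exp (-(k:ℝ)^2)) := by
  set q : ℝ := Real.exp (-1) with hq
  have hq0 : 0 < q := Real.exp_pos _
  have hq1 : ‖q‖ < 1 := by
    rw [Real.norm_eq_abs, abs_of_pos hq0]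
    exact (Real.exp_lt_one_iff).mpr (by norm_num)
  have h1 : Summable (fun k : ℕ => (k:ℝ)^n * q^k) :=
    summable_pow_mul_geometric_of_norm_lt_one n hq1
  have h2 : Summable (fun k : ℕ => ((k:ℝ)+1)^n * q^(k+1)) := by
    have := (summable_nat_add_iff (f := fun k : ℕ => (k:ℝ)^n * q^k) 1).mpr h1
    apply this.congr
    intro k
    push_cast
    ring
  have h3 : Summable (fun k : ℕ => ((k:ℝ)+1)^n * q^k) := by
    have := h2.mul_right q⁻¹
    apply this.congr
    intro k
    field_simp [pow_succ]
    ring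
  apply h3.of_nonneg_of_le (fun k => by positivity)
  intro k
  have hk : (k:ℝ) ≤ (k:ℝ)^2 := by
    exact_mod_cast Nat.le_self_pow (by norm_num) k
  have : Real.exp (-(k:ℝ)^2) ≤ q^k := by
    have : q^k = Real.exp (-(k:ℝ)) := by
      rw [hq, ← Real.exp_nat_mul]
      norm_num
    rw [this]
    exact Real.exp_le_exp.mpr (by linarith)
  have hpos : (0:ℝ) ≤ ((k:ℝ)+1)^n := by positivity
  exact mul_le_mul_of_nonneg_left this hpos

/-- (i) The area of `Σ` in any ball of radius `R` is at most
`e^{1/4} (4π)^{n/2} λ(Σ) Rⁿ`; (ii) conversely there is a dimensional constant `C_n` such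
that a uniform bound `μ_Σ(B_R(x₀)) ≤ V Rⁿ` on area ratios forces `λ(Σ) ≤ C_n V`. -/
theorem stmt10 (n : ℕ) (hn : 1 ≤ n) :
    (∀ S : Set (EuclideanSpace ℝ (Fin (n+1))), MeasurableSet S →
      ∀ x₀ : EuclideanSpace ℝ (Fin (n+1)), ∀ R : ℝ, 0 < R →
        (μH[(n:ℝ)]).restrict S (Metric.ball x₀ R)
          ≤ ENNReal.ofReal (Real.exp (1/4) * (4 * π) ^ ((n:ℝ)/2) * R ^ n) * entropy n S) ∧
    (∃ C : ℝ, ∀ S : Set (EuclideanSpace ℝ (Fin (n+1))), MeasurableSet S →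
      ∀ V : ℝ, 0 < V →
        (∀ x₀ : EuclideanSpace ℝ (Fin (n+1)), ∀ R : ℝ, 0 < R →
          (μH[(n:ℝ)]).restrict S (Metric.ball x₀ R) ≤ ENNReal.ofReal (V * R ^ n)) →
        entropy n S ≤ ENNReal.ofReal (C * V)) := by
  have h4π : (0:ℝ) < 4 * π := by positivity
  constructor
  · -- Part (i)
    intro S hS x₀ R hR
    set c : ℝ := Real.exp (1/4) * (4 * π) ^ ((n:ℝ)/2) * R ^ n with hc
    set a : ℝ := (4 * π * R^2) ^ (-(n:ℝ)/2) with ha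
    set M : ℝ≥0∞ := (μH[(n:ℝ)]).restrict S (Metric.ball x₀ R) with hM
    set I : ℝ≥0∞ :=
      ∫⁻ x in S, ENNReal.ofReal (Real.exp (-‖x - x₀‖ ^ 2 / (4 * R^2))) ∂μH[(n:ℝ)] with hI
    have hca : (0:ℝ) < c := by positivity
    have haa : (0:ℝ) < a := by positivity
    -- key scalar identity
    have key : c * a * Real.exp (-(1/4)) = 1 := by
      have h1 : (4*π : ℝ) ^ ((n:ℝ)/2) * (4*π : ℝ) ^ (-(n:ℝ)/2) = 1 := by
        rw [← Real.rpow_add h4π, show (n:ℝ)/2 + -(n:ℝ)/2 = 0 by ring, Real.rpow_zero]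
      have h2 : (R:ℝ)^n * ((R^2 : ℝ) ^ (-(n:ℝ)/2)) = 1 := by
        rw [← Real.rpow_natCast R n, ← Real.rpow_natCast R 2,
          ← Real.rpow_mul hR.le, ← Real.rpow_add hR,
          show (n:ℝ) + ((2:ℕ):ℝ)*(-(n:ℝ)/2) = 0 by push_cast; ring, Real.rpow_zero]
      have h3 : Real.exp (1/4) * Real.exp (-(1/4)) = 1 := by
        rw [← Real.exp_add]; norm_num
      have hsplit : a = (4*π : ℝ) ^ (-(n:ℝ)/2) * ((R^2 : ℝ) ^ (-(n:ℝ)/2)) := by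
        rw [ha, show (4 * π * R^2 : ℝ) = (4*π) * R^2 by ring,
          Real.mul_rpow h4π.le (sq_nonneg R)]
      calc c * a * Real.exp (-(1/4))
          = (Real.exp (1/4) * Real.exp (-(1/4))) *
            ((4*π : ℝ) ^ ((n:ℝ)/2) * (4*π : ℝ) ^ (-(n:ℝ)/2)) *
            ((R:ℝ)^n * ((R^2 : ℝ) ^ (-(n:ℝ)/2))) := by
            rw [hc, hsplit]; ring
        _ = 1 := by rw [h1, h2, h3]; ring
    -- lower bound for the integral
    have hIlow : ENNReal.ofReal (Real.exp (-(1/4))) * M ≤ I := by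
      have hMeq : M = μH[(n:ℝ)] (Metric.ball x₀ R ∩ S) := by
        rw [hM, Measure.restrict_apply measurableSet_ball]
      calc ENNReal.ofReal (Real.exp (-(1/4))) * M
          = ∫⁻ _ in Metric.ball x₀ R ∩ S,
              ENNReal.ofReal (Real.exp (-(1/4))) ∂μH[(n:ℝ)] := by
            rw [setLIntegral_const, hMeq]
        _ ≤ ∫⁻ x in Metric.ball x₀ R ∩ S,
              ENNReal.ofReal (Real.exp (-‖x - x₀‖ ^ 2 / (4 * R^2))) ∂μH[(n:ℝ)] := by
            apply setLIntegral_mono' (measurableSet_ball.inter hS)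
            intro x hx
            apply ENNReal.ofReal_le_ofReal
            apply Real.exp_le_exp.mpr
            have hxb : dist x x₀ < R := Metric.mem_ball.mp hx.1
            have hnorm : ‖x - x₀‖ < R := by rwa [← dist_eq_norm]
            have h1 : ‖x - x₀‖^2 ≤ R^2 := by nlinarith [norm_nonneg (x - x₀)]
            have h2 : ‖x - x₀‖^2 / (4*R^2) ≤ 1/4 := by
              rw [div_le_iff₀ (by positivity)]; nlinarith
            rw [neg_div]; linarith
        _ ≤ I := lintegral_mono_set Set.inter_subset_right
    -- entropy lower bound
    have hent : gaussianF n S x₀ (R^2) ≤ entropy n S := by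
      refine le_iSup_of_le x₀ ?_
      refine le_iSup_of_le (R^2) ?_
      exact le_iSup (fun _ : 0 < R^2 => gaussianF n S x₀ (R^2)) (by positivity)
    have hgF : gaussianF n S x₀ (R^2) = ENNReal.ofReal a * I := rfl
    calc M = ENNReal.ofReal c * (ENNReal.ofReal a *
            (ENNReal.ofReal (Real.exp (-(1/4))) * M)) := by
          rw [← mul_assoc, ← mul_assoc, ← ENNReal.ofReal_mul hca.le,
            ← ENNReal.ofReal_mul (by positivity), key, ENNReal.ofReal_one, one_mul]
      _ ≤ ENNReal.ofReal c * (ENNReal.ofReal a * I) := by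
          exact mul_le_mul_right (mul_le_mul_right hIlow _) _
      _ = ENNReal.ofReal c * gaussianF n S x₀ (R^2) := by rw [hgF]
      _ ≤ ENNReal.ofReal c * entropy n S := mul_le_mul_right hent _
  · -- Part (ii)
    set C : ℝ := ∑' k : ℕ, ((k:ℝ)+1)^n * Real.exp (-(k:ℝ)^2) with hCdef
    have hC0 : 0 ≤ C := tsum_nonneg (fun k => by positivity)
    refine ⟨C, ?_⟩
    intro S hS V hV hyp
    rw [entropy]
    refine iSup_le fun x₀ => iSup_le fun t => iSup_le fun ht => ?_
    set r : ℝ := Real.sqrt (4 * t) with hrdef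
    have h4t : (0:ℝ) < 4 * t := by linarith
    have hr : 0 < r := Real.sqrt_pos.mpr h4t
    have hr2 : r ^ 2 = 4 * t := Real.sq_sqrt h4t.le
    set A : ℕ → Set (EuclideanSpace ℝ (Fin (n+1))) :=
      fun k => Metric.ball x₀ (((k:ℝ)+1)*r) \ Metric.ball x₀ ((k:ℝ)*r) with hA
    -- S is covered by the annuli
    have hcover : S ⊆ ⋃ k, (A k ∩ S) := by
      intro x hx
      set k : ℕ := ⌊dist x x₀ / r⌋₊ with hk
      refine Set.mem_iUnion.mpr ⟨k, ⟨?_, ?_⟩, hx⟩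
      · rw [Metric.mem_ball]
        have := Nat.lt_floor_add_one (dist x x₀ / r)
        calc dist x x₀ = (dist x x₀ / r) * r := by field_simp
          _ < ((k:ℝ)+1) * r := by
            apply mul_lt_mul_of_pos_right _ hr
            exact_mod_cast this
      · simp only [Set.mem_setOf_eq, Metric.mem_ball, not_lt]
        have hfl : (k:ℝ) ≤ dist x x₀ / r :=
          Nat.floor_le (div_nonneg dist_nonneg hr.le)
        calc (k:ℝ) * r ≤ (dist x x₀ / r) * r := mul_le_mul_of_nonneg_right hfl hr.le
          _ = dist x x₀ := by field_simp
    -- per-annulus bound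
    have hterm : ∀ k : ℕ,
        (∫⁻ x in A k ∩ S,
          ENNReal.ofReal (Real.exp (-‖x - x₀‖ ^ 2 / (4 * t))) ∂μH[(n:ℝ)])
        ≤ ENNReal.ofReal (V * r^n * (((k:ℝ)+1)^n * Real.exp (-(k:ℝ)^2))) := by
      intro k
      have hAk : MeasurableSet (A k ∩ S) :=
        (measurableSet_ball.diff measurableSet_ball).inter hS
      have hmono : ∀ x ∈ A k ∩ S,
          ENNReal.ofReal (Real.exp (-‖x - x₀‖ ^ 2 / (4 * t)))
            ≤ ENNReal.ofReal (Real.exp (-(k:ℝ)^2)) := by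
        intro x hx
        apply ENNReal.ofReal_le_ofReal
        apply Real.exp_le_exp.mpr
        have hd : (k:ℝ)*r ≤ dist x x₀ := by
          have := hx.1.2
          rw [Metric.mem_ball, not_lt] at this
          exact this
        have hnorm : (k:ℝ)*r ≤ ‖x - x₀‖ := by rwa [← dist_eq_norm]
        have hsq : ((k:ℝ)*r)^2 ≤ ‖x - x₀‖^2 :=
          pow_le_pow_left₀ (by positivity) hnorm 2
        have hk2 : (k:ℝ)^2 * (4*t) ≤ ‖x - x₀‖^2 := by
          calc (k:ℝ)^2 * (4*t) = ((k:ℝ)*r)^2 := by rw [← hr2]; ring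
            _ ≤ ‖x - x₀‖^2 := hsq
        rw [neg_div, neg_le_neg_iff, le_div_iff₀ h4t]
        exact hk2
      have hmeas : μH[(n:ℝ)] (A k ∩ S) ≤ ENNReal.ofReal (V * (((k:ℝ)+1)*r)^n) := by
        have hsub : A k ∩ S ⊆ Metric.ball x₀ (((k:ℝ)+1)*r) ∩ S := by
          intro x hx; exact ⟨hx.1.1, hx.2⟩
        calc μH[(n:ℝ)] (A k ∩ S)
            ≤ μH[(n:ℝ)] (Metric.ball x₀ (((k:ℝ)+1)*r) ∩ S) := measure_mono hsub
          _ = (μH[(n:ℝ)]).restrict S (Metric.ball x₀ (((k:ℝ)+1)*r)) := by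
              rw [Measure.restrict_apply measurableSet_ball]
          _ ≤ ENNReal.ofReal (V * (((k:ℝ)+1)*r)^n) :=
              hyp x₀ (((k:ℝ)+1)*r) (by positivity)
      calc (∫⁻ x in A k ∩ S,
            ENNReal.ofReal (Real.exp (-‖x - x₀‖ ^ 2 / (4 * t))) ∂μH[(n:ℝ)])
          ≤ ∫⁻ _ in A k ∩ S, ENNReal.ofReal (Real.exp (-(k:ℝ)^2)) ∂μH[(n:ℝ)] :=
            setLIntegral_mono' hAk hmono
        _ = ENNReal.ofReal (Real.exp (-(k:ℝ)^2)) * μH[(n:ℝ)] (A k ∩ S) :=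
            setLIntegral_const _ _
        _ ≤ ENNReal.ofReal (Real.exp (-(k:ℝ)^2)) *
              ENNReal.ofReal (V * (((k:ℝ)+1)*r)^n) := mul_le_mul_right hmeas _
        _ = ENNReal.ofReal (V * r^n * (((k:ℝ)+1)^n * Real.exp (-(k:ℝ)^2))) := by
            rw [← ENNReal.ofReal_mul (Real.exp_pos _).le]
            congr 1
            rw [mul_pow]
            ring
    -- bound the integral
    have hsum : Summable (fun k : ℕ => V * r^n * (((k:ℝ)+1)^n * Real.exp (-(k:ℝ)^2))) :=
      (aux_summable n).mul_left _
    have hint : (∫⁻ x in S,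
          ENNReal.ofReal (Real.exp (-‖x - x₀‖ ^ 2 / (4 * t))) ∂μH[(n:ℝ)])
        ≤ ENNReal.ofReal (V * r^n * C) := by
      calc (∫⁻ x in S,
            ENNReal.ofReal (Real.exp (-‖x - x₀‖ ^ 2 / (4 * t))) ∂μH[(n:ℝ)])
          ≤ ∫⁻ x in ⋃ k, (A k ∩ S),
              ENNReal.ofReal (Real.exp (-‖x - x₀‖ ^ 2 / (4 * t))) ∂μH[(n:ℝ)] :=
            lintegral_mono_set hcover
        _ ≤ ∑' k : ℕ, ∫⁻ x in A k ∩ S,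
              ENNReal.ofReal (Real.exp (-‖x - x₀‖ ^ 2 / (4 * t))) ∂μH[(n:ℝ)] :=
            lintegral_iUnion_le _ _
        _ ≤ ∑' k : ℕ, ENNReal.ofReal (V * r^n * (((k:ℝ)+1)^n * Real.exp (-(k:ℝ)^2))) :=
            ENNReal.tsum_le_tsum hterm
        _ = ENNReal.ofReal (∑' k : ℕ, V * r^n * (((k:ℝ)+1)^n * Real.exp (-(k:ℝ)^2))) :=
            (ENNReal.ofReal_tsum_of_nonneg (fun k => by positivity) hsum).symm
        _ = ENNReal.ofReal (V * r^n * C) := by rw [tsum_mul_left]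
    -- scalar comparison
    have hscal : (4 * π * t) ^ (-(n:ℝ)/2) * (V * r^n * C) ≤ C * V := by
      have hrn : r^n = (4*t) ^ ((n:ℝ)/2) := by
        rw [hrdef, Real.sqrt_eq_rpow, ← Real.rpow_natCast ((4*t) ^ ((1:ℝ)/2)) n,
          ← Real.rpow_mul h4t.le]
        congr 1
        ring
      have h1 : (4 * π * t) ^ (-(n:ℝ)/2) ≤ (4*t) ^ (-(n:ℝ)/2) := by
        apply rpow_le_rpow_of_nonpos (by linarith)
        · nlinarith [Real.pi_gt_three]
        · have : (0:ℝ) ≤ (n:ℝ) := Nat.cast_nonneg n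
          rw [neg_div]
          simp only [Left.neg_nonpos_iff]
          positivity
      have h2 : (4*t) ^ (-(n:ℝ)/2) * (4*t) ^ ((n:ℝ)/2) = 1 := by
        rw [← Real.rpow_add h4t, show -(n:ℝ)/2 + (n:ℝ)/2 = 0 by ring, Real.rpow_zero]
      have h3 : (4 * π * t) ^ (-(n:ℝ)/2) * r^n ≤ 1 := by
        rw [hrn]
        calc (4 * π * t) ^ (-(n:ℝ)/2) * (4*t) ^ ((n:ℝ)/2)
            ≤ (4*t) ^ (-(n:ℝ)/2) * (4*t) ^ ((n:ℝ)/2) := by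
              apply mul_le_mul_of_nonneg_right h1 (Real.rpow_nonneg h4t.le _)
          _ = 1 := h2
      have hCV : (0:ℝ) ≤ C * V := by positivity
      calc (4 * π * t) ^ (-(n:ℝ)/2) * (V * r^n * C)
          = ((4 * π * t) ^ (-(n:ℝ)/2) * r^n) * (C * V) := by ring
        _ ≤ 1 * (C * V) := mul_le_mul_of_nonneg_right h3 hCV
        _ = C * V := one_mul _
    -- conclude
    calc gaussianF n S x₀ t
        = ENNReal.ofReal ((4 * π * t) ^ (-(n:ℝ)/2)) *
            ∫⁻ x in S, ENNReal.ofReal (Real.exp (-‖x - x₀‖ ^ 2 / (4 * t))) ∂μH[(n:ℝ)] := rfl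
      _ ≤ ENNReal.ofReal ((4 * π * t) ^ (-(n:ℝ)/2)) *
            ENNReal.ofReal (V * r^n * C) := mul_le_mul_right hint _
      _ = ENNReal.ofReal ((4 * π * t) ^ (-(n:ℝ)/2) * (V * r^n * C)) := by
          rw [← ENNReal.ofReal_mul (Real.rpow_nonneg (by positivity) _)]
      _ ≤ ENNReal.ofReal (C * V) := ENNReal.ofReal_le_ofReal hscal
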